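/- Let (s_n)_{n ≥ 1} be a weakly decreasing sequence of nonnegative real numbers and A > 0 a constant such that s_n ≤ A/√n for all n ≥ 1 and liminf_{n→∞} (s_1 + ⋯ + s_n)/√n ≥ 2A. Then lim_{n→∞} √n · s_n = A. -/

import Mathlib

open Filter

lemma tsmoa_sum_upper (s : ℕ → ℝ) (A : ℝ) (hA : 0 < A)
    (hbound : ∀ n, 1 ≤ n → s n ≤ A / Real.sqrt n) :
    ∀ n : ℕ, (∑ m ∈ Finset.range n, s (m + 1)) ≤ 2 * A * Real.sqrt n := by
  intro n
  induction n with
  | zero => simp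
  | succ n ih =>
    rw [Finset.sum_range_succ]
    have hb := hbound (n+1) (Nat.le_add_left 1 n)
    have ha : Real.sqrt n ≥ 0 := Real.sqrt_nonneg _
    have hbpos : (0:ℝ) < Real.sqrt (n+1) := Real.sqrt_pos.2 (by positivity)
    have h1 : Real.sqrt n ^ 2 = (n:ℝ) := Real.sq_sqrt (by positivity)
    have h2 : Real.sqrt (n+1) ^ 2 = (n:ℝ)+1 := by
      rw [Real.sq_sqrt (by positivity)]
    have key : A / Real.sqrt (n+1) ≤ 2 * A * Real.sqrt (n+1) - 2 * A * Real.sqrt n := by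
      rw [div_le_iff₀ hbpos]
      nlinarith [sq_nonneg (Real.sqrt (n+1) - Real.sqrt n), mul_pos hA hbpos]
    have : ((n:ℝ)+1) = ((n+1 : ℕ) : ℝ) := by push_cast; ring
    calc (∑ m ∈ Finset.range n, s (m + 1)) + s (n+1)
        ≤ 2 * A * Real.sqrt n + A / Real.sqrt (n+1) := by
          push_cast at hb ⊢; linarith
      _ ≤ 2 * A * Real.sqrt (n+1) := by linarith
      _ = 2 * A * Real.sqrt ((n+1 : ℕ)) := by rw [this]

lemma tsmoa_sum_tail (s : ℕ → ℝ)
    (hmono : ∀ m n, 1 ≤ m → m ≤ n → s n ≤ s m) :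
    ∀ n N : ℕ, 1 ≤ n → n ≤ N →
    (∑ m ∈ Finset.range N, s (m + 1)) ≤ (∑ m ∈ Finset.range n, s (m + 1)) + ((N:ℝ) - n) * s n := by
  intro n N hn hnN
  have hsplit : (∑ m ∈ Finset.Ico 0 n, s (m+1)) + (∑ m ∈ Finset.Ico n N, s (m+1))
      = ∑ m ∈ Finset.Ico 0 N, s (m+1) := Finset.sum_Ico_consecutive _ (Nat.zero_le _) hnN
  rw [Finset.range_eq_Ico, ← hsplit]
  have : (∑ m ∈ Finset.Ico n N, s (m+1)) ≤ (N - n) • s n := by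
    have := Finset.sum_le_card_nsmul (Finset.Ico n N) (fun m => s (m+1)) (s n)
      (fun x hx => hmono n (x+1) hn (le_trans (Finset.mem_Ico.1 hx).1 (Nat.le_succ x)))
    rwa [Nat.card_Ico] at this
  have hcast : ((N - n : ℕ) : ℝ) = (N:ℝ) - n := by
    push_cast [Nat.cast_sub hnN]; ring
  rw [nsmul_eq_mul, hcast] at this
  rw [Finset.range_eq_Ico]; linarith

set_option maxHeartbeats 1000000
/-- Let `(s_n)_{n ≥ 1}` be a weakly decreasing sequence of nonnegative reals and `A > 0` with
`s_n ≤ A/√n` for all `n ≥ 1` and `liminf (s_1 + ⋯ + s_n)/√n ≥ 2A`. Then `√n · s_n → A`.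
(Here `s_1 + ⋯ + s_n = ∑_{m ∈ range n} s (m+1)`.) -/
theorem tendsto_sqrt_mul_of_antitone (s : ℕ → ℝ) (A : ℝ) (hA : 0 < A)
    (hnonneg : ∀ n, 1 ≤ n → 0 ≤ s n)
    (hmono : ∀ m n, 1 ≤ m → m ≤ n → s n ≤ s m)
    (hbound : ∀ n, 1 ≤ n → s n ≤ A / Real.sqrt n)
    (hliminf : 2 * A ≤
      Filter.liminf (fun n : ℕ => (∑ m ∈ Finset.range n, s (m + 1)) / Real.sqrt n) atTop) :
    Tendsto (fun n : ℕ => Real.sqrt n * s n) atTop (nhds A) := by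
  set S : ℕ → ℝ := fun n => ∑ m ∈ Finset.range n, s (m + 1) with hS_def
  have hSup : ∀ n : ℕ, S n ≤ 2 * A * Real.sqrt n := tsmoa_sum_upper s A hA hbound
  have hStail := tsmoa_sum_tail s hmono
  have hSnonneg : ∀ n : ℕ, 0 ≤ S n :=
    fun n => Finset.sum_nonneg fun m _ => hnonneg (m+1) (Nat.le_add_left 1 m)
  -- basic bounds on f n := √n * s n
  have hf_lb : ∀ n : ℕ, 0 ≤ Real.sqrt n * s n := by
    intro n
    rcases Nat.eq_zero_or_pos n with h | h
    · simp [h]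
    · exact mul_nonneg (Real.sqrt_nonneg _) (hnonneg n h)
  have hf_ub : ∀ n : ℕ, Real.sqrt n * s n ≤ A := by
    intro n
    rcases Nat.eq_zero_or_pos n with h | h
    · simp [h]; linarith
    · have hs : (0:ℝ) < Real.sqrt n := Real.sqrt_pos.2 (Nat.cast_pos.2 h)
      calc Real.sqrt n * s n ≤ Real.sqrt n * (A / Real.sqrt n) :=
            mul_le_mul_of_nonneg_left (hbound n h) hs.le
        _ = A := by field_simp
  -- key: for every small ε, eventually A - ε ≤ √n * s n
  have key : ∀ ε : ℝ, 0 < ε → ε < A → ∀ᶠ n : ℕ in atTop, A - ε ≤ Real.sqrt n * s n := by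
    intro ε hε hεA
    -- choose k with A - ε/2 < 2A/(√(1+1/k)+1)
    have htk : Tendsto (fun k : ℕ => 2*A/(Real.sqrt (1+1/(k:ℝ))+1)) atTop (nhds A) := by
      have h1 : Tendsto (fun k : ℕ => 1 + 1/(k:ℝ)) atTop (nhds 1) := by
        simpa using tendsto_const_nhds.add (tendsto_one_div_atTop_nhds_zero_nat : Tendsto (fun n : ℕ => 1/(n:ℝ)) atTop (nhds 0))
      have h2 : Tendsto (fun k : ℕ => Real.sqrt (1+1/(k:ℝ)) + 1) atTop (nhds 2) := by
        have h2a := ((Real.continuous_sqrt.tendsto 1).comp h1).add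
          (tendsto_const_nhds (x := (1:ℝ)) (f := (atTop : Filter ℕ)))
        have : Real.sqrt 1 + 1 = 2 := by rw [Real.sqrt_one]; norm_num
        rw [this] at h2a
        exact h2a
      have h3 := (tendsto_const_nhds (x := 2*A) (f := (atTop : Filter ℕ))).div h2
        (two_ne_zero (α := ℝ))
      have h4 : 2*A/2 = A := by ring
      rwa [h4] at h3
    obtain ⟨k, hk2, hk1⟩ :=
      ((htk.eventually (eventually_gt_nhds (show A - ε/2 < A by linarith))).and
        (eventually_ge_atTop 1)).exists
    have hkpos : (0:ℝ) < k := by exact_mod_cast hk1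
    have hk1R : (1:ℝ) ≤ k := by exact_mod_cast hk1
    set δ : ℝ := ε/(8*k) with hδ_def
    have hδpos : 0 < δ := by positivity
    set x : ℝ := 1 + 1/(k:ℝ) with hx_def
    set u : ℝ := Real.sqrt x with hu_def
    have hxpos : (0:ℝ) < x := by positivity
    have hx1 : (1:ℝ) ≤ x := by
      have : (0:ℝ) ≤ 1/(k:ℝ) := by positivity
      rw [hx_def]; linarith
    have hx2 : x ≤ 2 := by
      have : 1/(k:ℝ) ≤ 1 := by rw [div_le_one hkpos]; exact hk1R
      rw [hx_def]; linarith
    have hu2 : u^2 = x := Real.sq_sqrt hxpos.le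
    have hu1 : 1 ≤ u := by
      rw [hu_def, show (1:ℝ) = Real.sqrt 1 by simp]
      exact Real.sqrt_le_sqrt hx1
    have hu_le2 : u ≤ 2 := by nlinarith [hu2, hu1, hx2, sq_nonneg (u - 2)]
    set B : ℝ := (2*A - δ)*u - 2*A with hB_def
    -- k * B > A - 3ε/4
    have hku : (k:ℝ) * (u^2 - 1) = 1 := by
      rw [hu2, hx_def]; field_simp; ring
    have h2A : 2*A*k*(u-1)*(u+1) = 2*A := by nlinarith [hku]
    have hupos : (0:ℝ) < u + 1 := by linarith
    have hA1 : A - ε/2 < 2*A*(k:ℝ)*(u-1) := by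
      have h3 : (A - ε/2) * (u+1) < (2*A*(k:ℝ)*(u-1)) * (u+1) := by
        rw [h2A]
        calc (A - ε/2) * (u+1) < 2*A/(u+1) * (u+1) :=
              mul_lt_mul_of_pos_right hk2 hupos
          _ = 2*A := by field_simp
      exact lt_of_mul_lt_mul_right h3 hupos.le
    have hkδ : (k:ℝ) * δ = ε/8 := by
      rw [hδ_def]; field_simp [hkpos.ne']
    have hkB : A - 3*ε/4 < (k:ℝ) * B := by
      have hexp : (k:ℝ) * B = 2*A*(k:ℝ)*(u-1) - ((k:ℝ)*δ)*u := by rw [hB_def]; ring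
      rw [hexp, hkδ]
      nlinarith [hu_le2, hε, hu1]
    have hBpos : 0 < B := by nlinarith [hkB, hεA, hkpos, hε]
    clear_value δ x u B
    -- from the liminf hypothesis
    have hSlb : ∀ᶠ N : ℕ in atTop, (2*A - δ) * Real.sqrt N ≤ S N := by
      have hbddS : IsBoundedUnder (· ≥ ·) atTop (fun N : ℕ => S N / Real.sqrt N) :=
        isBoundedUnder_of ⟨0, fun N => div_nonneg (hSnonneg N) (Real.sqrt_nonneg _)⟩
      have hev0 := eventually_lt_of_lt_liminf
        (show 2*A - δ < liminf (fun N : ℕ => S N / Real.sqrt N) atTop by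
          refine lt_of_lt_of_le ?_ hliminf; linarith) hbddS
      filter_upwards [hev0, eventually_ge_atTop 1] with N hN hN1
      have hs : (0:ℝ) < Real.sqrt N := Real.sqrt_pos.2 (Nat.cast_pos.2 hN1)
      calc (2*A - δ) * Real.sqrt N ≤ (S N / Real.sqrt N) * Real.sqrt N :=
            mul_le_mul_of_nonneg_right hN.le hs.le
        _ = S N := by field_simp
    obtain ⟨N₀, hN₀⟩ := eventually_atTop.1 hSlb
    -- limit n/(n+k) → 1
    have htend : Tendsto (fun n : ℕ => (k:ℝ)*B*((n:ℝ)/((n:ℝ)+k))) atTop (nhds ((k:ℝ)*B)) := by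
      have h1 : Tendsto (fun n : ℕ => ((n:ℝ)+k)) atTop atTop :=
        tendsto_atTop_add_const_right atTop _ tendsto_natCast_atTop_atTop
      have h2 : Tendsto (fun n : ℕ => (k:ℝ)/((n:ℝ)+k)) atTop (nhds 0) :=
        tendsto_const_nhds.div_atTop h1
      have h3 : Tendsto (fun n : ℕ => 1 - (k:ℝ)/((n:ℝ)+k)) atTop (nhds 1) := by
        simpa using tendsto_const_nhds.sub h2
      have h4 : ∀ᶠ n : ℕ in atTop, 1 - (k:ℝ)/((n:ℝ)+k) = (n:ℝ)/((n:ℝ)+k) := by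
        filter_upwards [eventually_ge_atTop 1] with n hn
        have hnk : (0:ℝ) < (n:ℝ)+k := by positivity
        field_simp; ring
      have h5 : Tendsto (fun n : ℕ => (n:ℝ)/((n:ℝ)+k)) atTop (nhds 1) :=
        h3.congr' h4
      simpa using tendsto_const_nhds.mul h5
    have hev : ∀ᶠ n : ℕ in atTop, A - ε < (k:ℝ)*B*((n:ℝ)/((n:ℝ)+k)) :=
      htend.eventually (eventually_gt_nhds (by linarith))
    -- final chain
    filter_upwards [hev, eventually_ge_atTop 1, eventually_ge_atTop N₀] with n hn1 hn2 hn3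
    set m : ℕ := n / k + 1 with hm_def
    set N : ℕ := n + m with hN_def
    have hnm_lt : n < k * m := by
      have h1 := Nat.div_add_mod n k
      have h2 : k * (n/k + 1) = k * (n/k) + k := Nat.mul_succ k (n/k)
      have h3 := Nat.mod_lt n hk1
      rw [hm_def]
      omega
    have hm_lb : (n:ℝ)/(k:ℝ) < (m:ℝ) := by
      rw [div_lt_iff₀ hkpos]
      calc (n:ℝ) < ((k*m : ℕ) : ℝ) := by exact_mod_cast hnm_lt
        _ = (m:ℝ)*k := by push_cast; ring
    have hm_ub : (m:ℝ) ≤ (n:ℝ)/k + 1 := by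
      rw [hm_def]
      push_cast
      have := Nat.cast_div_le (α := ℝ) (m := n) (n := k)
      linarith
    have hmpos : (0:ℝ) < m := Nat.cast_pos.2 (Nat.succ_pos _)
    have hnpos : (0:ℝ) < n := Nat.cast_pos.2 hn2
    have hsqn : (0:ℝ) < Real.sqrt n := Real.sqrt_pos.2 hnpos
    have hNn : n ≤ N := Nat.le_add_right n m
    have hSN := hN₀ N (le_trans hn3 hNn)
    have htail := hStail n N hn2 hNn
    have hcastN : ((N:ℝ) - n) = (m:ℝ) := by rw [hN_def]; push_cast; ring
    rw [hcastN] at htail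
    -- √N ≥ √n * u
    have hN_lb : (n:ℝ) * x ≤ (N:ℝ) := by
      have hxe : (n:ℝ) * x = n + n/k := by rw [hx_def]; field_simp
      rw [hN_def, hxe]
      push_cast
      have hmc : ((n/k : ℕ):ℝ) + 1 = (m:ℝ) := by rw [hm_def]; push_cast; ring
      linarith [hm_lb, hmc]
    have hsqN : Real.sqrt n * u ≤ Real.sqrt N := by
      rw [hu_def, ← Real.sqrt_mul hnpos.le]
      exact Real.sqrt_le_sqrt hN_lb
    have h2Aδ : 0 ≤ 2*A - δ := by
      have : δ ≤ ε/8 := by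
        rw [hδ_def]
        apply div_le_div_of_nonneg_left hε.le (by norm_num) (by nlinarith)
      linarith
    -- m * s n ≥ √n * B
    have hms : Real.sqrt n * B ≤ (m:ℝ) * s n := by
      have c1 : (2*A - δ) * (Real.sqrt n * u) ≤ (2*A - δ) * Real.sqrt N :=
        mul_le_mul_of_nonneg_left hsqN h2Aδ
      have c2 := hSup n
      have c3 : (2*A - δ) * (Real.sqrt n * u) ≤ 2*A*Real.sqrt n + (m:ℝ) * s n := by
        calc (2*A - δ) * (Real.sqrt n * u) ≤ (2*A - δ) * Real.sqrt N := c1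
          _ ≤ S N := hSN
          _ ≤ S n + (m:ℝ) * s n := htail
          _ ≤ 2*A*Real.sqrt n + (m:ℝ) * s n := by linarith
      rw [hB_def]
      nlinarith [c3]
    -- √n * s n ≥ n*B/m
    have hstep : (n:ℝ)*B/(m:ℝ) ≤ Real.sqrt n * s n := by
      have hsn : Real.sqrt n * B / (m:ℝ) ≤ s n := by
        rw [div_le_iff₀ hmpos]
        linarith [hms]
      calc (n:ℝ)*B/(m:ℝ) = (Real.sqrt n * Real.sqrt n) * B / (m:ℝ) := by
            rw [Real.mul_self_sqrt hnpos.le]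
        _ = Real.sqrt n * (Real.sqrt n * B / (m:ℝ)) := by ring
        _ ≤ Real.sqrt n * s n := mul_le_mul_of_nonneg_left hsn hsqn.le
    have hstep2 : (k:ℝ)*B*((n:ℝ)/((n:ℝ)+k)) ≤ (n:ℝ)*B/(m:ℝ) := by
      have hnk : (0:ℝ) < (n:ℝ)+k := by positivity
      have hd : (0:ℝ) < (n:ℝ)/k + 1 := by positivity
      have e1 : (n:ℝ)/k + 1 = ((n:ℝ)+k)/k := by
        rw [add_div, div_self hkpos.ne']
      have heq : (k:ℝ)*B*((n:ℝ)/((n:ℝ)+k)) = (n:ℝ)*B/((n:ℝ)/k + 1) := by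
        rw [e1, div_div_eq_mul_div]
        ring
      rw [heq]
      exact div_le_div_of_nonneg_left (by positivity) hmpos hm_ub
    linarith [hn1, hstep, hstep2]
  -- conclude via liminf/limsup
  have hbdd_above : IsBoundedUnder (· ≤ ·) atTop (fun n : ℕ => Real.sqrt n * s n) :=
    isBoundedUnder_of ⟨A, hf_ub⟩
  have hbdd_below : IsBoundedUnder (· ≥ ·) atTop (fun n : ℕ => Real.sqrt n * s n) :=
    isBoundedUnder_of ⟨0, hf_lb⟩
  have hlimsup : limsup (fun n : ℕ => Real.sqrt n * s n) atTop ≤ A :=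
    limsup_le_of_le hbdd_below.isCoboundedUnder_le (Eventually.of_forall hf_ub)
  have hliminf' : A ≤ liminf (fun n : ℕ => Real.sqrt n * s n) atTop := by
    apply le_of_forall_pos_le_add
    intro ε hε
    set ε' : ℝ := min ε (A/2) with hε'_def
    have hε'pos : 0 < ε' := lt_min hε (by linarith)
    have hε'A : ε' < A := lt_of_le_of_lt (min_le_right _ _) (by linarith)
    have h1 : A - ε' ≤ liminf (fun n : ℕ => Real.sqrt n * s n) atTop :=
      le_liminf_of_le hbdd_above.isCoboundedUnder_ge (key ε' hε'pos hε'A)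
    have h2 : ε' ≤ ε := min_le_left _ _
    linarith
  exact tendsto_of_le_liminf_of_limsup_le hliminf' hlimsup hbdd_above hbdd_below
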